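/- Let X be a locally compact Hausdorff space, σ a local homeomorphism from an open subset U of X onto an open subset V of X, and endow the Deaconu–Renault groupoid G(X,σ) with the topology generated by the sets Z(A,m,n,B). Then the isotropy Iso(G(X,σ)) := {(x,k,y) ∈ G(X,σ) : x = y} equals {(x,k,x) : x ∈ X, k ∈ Stab(x)}, and its interior in G(X,σ) equals {(x,k,x) : x ∈ X, k ∈ Stab^ess(x)}. In particular, for each (x,k,x) in the interior of the isotropy there exist m, n ∈ ℕ₀ with k = m − n and an open neighbourhood O ⊆ U_m ∩ U_n of x with σᵐ|_O = σⁿ|_O. -/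

import Mathlib

open Set Function

/-- The domain `Uₙ` of the `n`-th iterate of a local homeomorphism `σ` from an open
set `U ⊆ X` onto an open set `V ⊆ X`: `U₀ = X` and `Uₙ₊₁ = σ⁻¹(Uₙ ∩ V)` (inside `U`). -/
def iterDom {X : Type*} (σ : X → X) (U V : Set X) : ℕ → Set X
  | 0 => Set.univ
  | n + 1 => U ∩ σ ⁻¹' (iterDom σ U V n ∩ V)

/-- `Stab(x) = {m - n : x ∈ U_m ∩ U_n, σᵐ(x) = σⁿ(x)} ⊆ ℤ`. -/
def DRStab {X : Type*} (σ : X → X) (U V : Set X) (x : X) : Set ℤ :=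
  {p | ∃ m n : ℕ, p = (m : ℤ) - (n : ℤ) ∧
    x ∈ iterDom σ U V m ∩ iterDom σ U V n ∧ σ^[m] x = σ^[n] x}

/-- `Stab^ess(x)`: those `m - n` for which `σᵐ = σⁿ` on a neighbourhood of `x`. -/
def DRStabEss {X : Type*} [TopologicalSpace X] (σ : X → X) (U V : Set X) (x : X) : Set ℤ :=
  {p | ∃ m n : ℕ, p = (m : ℤ) - (n : ℤ) ∧
    ∃ O : Set X, IsOpen O ∧ x ∈ O ∧ O ⊆ iterDom σ U V m ∩ iterDom σ U V n ∧
      Set.EqOn (σ^[m]) (σ^[n]) O}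

/-- `Stab_min(x) := min {p ∈ Stab(x) : p ≥ 1}` in `ℕ∞` (`min ∅ = ∞`). -/
noncomputable def DRStabMin {X : Type*} (σ : X → X) (U V : Set X) (x : X) : ℕ∞ :=
  sInf {p : ℕ∞ | ∃ q : ℕ, p = (q : ℕ∞) ∧ 1 ≤ q ∧ (q : ℤ) ∈ DRStab σ U V x}

/-- `Stab^ess_min(x) := min {p ∈ Stab^ess(x) : p ≥ 1}` in `ℕ∞`. -/
noncomputable def DRStabEssMin {X : Type*} [TopologicalSpace X] (σ : X → X) (U V : Set X)
    (x : X) : ℕ∞ :=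
  sInf {p : ℕ∞ | ∃ q : ℕ, p = (q : ℕ∞) ∧ 1 ≤ q ∧ (q : ℤ) ∈ DRStabEss σ U V x}

/-- `(h, l, k, l', k')` is a continuous orbit equivalence from `(X, σ)` to `(Y, τ)`. -/
def DRCOE {X Y : Type*} [TopologicalSpace X] [TopologicalSpace Y]
    (σ : X → X) (Uσ : Set X) (τ : Y → Y) (Uτ : Set Y)
    (h : X ≃ₜ Y) (l k : X → ℕ) (l' k' : Y → ℕ) : Prop :=
  ContinuousOn l Uσ ∧ ContinuousOn k Uσ ∧ ContinuousOn l' Uτ ∧ ContinuousOn k' Uτ ∧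
    (∀ x ∈ Uσ, τ^[l x] (h x) = τ^[k x] (h (σ x))) ∧
    (∀ y ∈ Uτ, σ^[l' y] (h.symm y) = σ^[k' y] (h.symm (τ y)))

/-- The continuous orbit equivalence `(h, l, k, l', k')` preserves stabilisers. -/
def DRPreservesStab {X Y : Type*} [TopologicalSpace X] [TopologicalSpace Y]
    (σ : X → X) (Uσ Vσ : Set X) (τ : Y → Y) (Uτ Vτ : Set Y)
    (h : X ≃ₜ Y) (l k : X → ℕ) (l' k' : Y → ℕ) : Prop :=
  (∀ x : X, DRStabMin σ Uσ Vσ x < ⊤ ↔ DRStabMin τ Uτ Vτ (h x) < ⊤) ∧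
  (∀ (x : X) (p : ℕ), 1 ≤ p → (p : ℕ∞) = DRStabMin σ Uσ Vσ x → σ^[p] x = x →
    (((∑ j ∈ Finset.range p, ((l (σ^[j] x) : ℤ) - (k (σ^[j] x) : ℤ))).natAbs : ℕ∞)
      = DRStabMin τ Uτ Vτ (h x))) ∧
  (∀ (y : Y) (p : ℕ), 1 ≤ p → (p : ℕ∞) = DRStabMin τ Uτ Vτ y → τ^[p] y = y →
    (((∑ j ∈ Finset.range p, ((l' (τ^[j] y) : ℤ) - (k' (τ^[j] y) : ℤ))).natAbs : ℕ∞)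
      = DRStabMin σ Uσ Vσ (h.symm y)))

/-- The continuous orbit equivalence `(h, l, k, l', k')` preserves essential stabilisers. -/
def DRPreservesStabEss {X Y : Type*} [TopologicalSpace X] [TopologicalSpace Y]
    (σ : X → X) (Uσ Vσ : Set X) (τ : Y → Y) (Uτ Vτ : Set Y)
    (h : X ≃ₜ Y) (l k : X → ℕ) (l' k' : Y → ℕ) : Prop :=
  (∀ x : X, DRStabEssMin σ Uσ Vσ x < ⊤ ↔ DRStabEssMin τ Uτ Vτ (h x) < ⊤) ∧
  (∀ (x : X) (p : ℕ), 1 ≤ p → (p : ℕ∞) = DRStabEssMin σ Uσ Vσ x → σ^[p] x = x →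
    (((∑ j ∈ Finset.range p, ((l (σ^[j] x) : ℤ) - (k (σ^[j] x) : ℤ))).natAbs : ℕ∞)
      = DRStabEssMin τ Uτ Vτ (h x))) ∧
  (∀ (y : Y) (p : ℕ), 1 ≤ p → (p : ℕ∞) = DRStabEssMin τ Uτ Vτ y → τ^[p] y = y →
    (((∑ j ∈ Finset.range p, ((l' (τ^[j] y) : ℤ) - (k' (τ^[j] y) : ℤ))).natAbs : ℕ∞)
      = DRStabEssMin σ Uσ Vσ (h.symm y)))

/-- The Deaconu–Renault groupoid `G(X,σ)` as a subset of `X × ℤ × X`. -/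
def DRset {X : Type*} (σ : X → X) (U V : Set X) : Set (X × ℤ × X) :=
  {p | ∃ m n : ℕ, p.2.1 = (m : ℤ) - (n : ℤ) ∧
    p.1 ∈ iterDom σ U V m ∧ p.2.2 ∈ iterDom σ U V n ∧ σ^[m] p.1 = σ^[n] p.2.2}

/-- `f` restricts to a homeomorphism of `A` onto its (open) image. -/
def HomeoOnto {X : Type*} [TopologicalSpace X] (f : X → X) (A : Set X) : Prop :=
  ∃ e : PartialHomeomorph X X, e.source = A ∧ e.target = f '' A ∧ Set.EqOn f e A

/-- The basic sets `Z(A, m, n, B)` of the Deaconu–Renault groupoid. -/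
def DRbasic {X : Type*} [TopologicalSpace X] (σ : X → X) (U V : Set X) :
    Set (Set ↥(DRset σ U V)) :=
  {S | ∃ (m n : ℕ) (A B : Set X), IsOpen A ∧ IsOpen B ∧
    A ⊆ iterDom σ U V m ∧ B ⊆ iterDom σ U V n ∧
    HomeoOnto (σ^[m]) A ∧ HomeoOnto (σ^[n]) B ∧
    S = {g : ↥(DRset σ U V) | g.1.1 ∈ A ∧ g.1.2.2 ∈ B ∧
      g.1.2.1 = (m : ℤ) - (n : ℤ) ∧ σ^[m] g.1.1 = σ^[n] g.1.2.2}}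

/-- The topology on `G(X,σ)` generated by the sets `Z(A,m,n,B)`. -/
def DRtop {X : Type*} [TopologicalSpace X] (σ : X → X) (U V : Set X) :
    TopologicalSpace ↥(DRset σ U V) :=
  TopologicalSpace.generateFrom (DRbasic σ U V)

/-- The inversion map `(x, k, y) ↦ (y, -k, x)` of `G(X,σ)`. -/
def DRinv {X : Type*} (σ : X → X) (U V : Set X) : ↥(DRset σ U V) → ↥(DRset σ U V) :=
  fun g => ⟨(g.1.2.2, -g.1.2.1, g.1.1), by
    obtain ⟨m, n, h1, h2, h3, h4⟩ := g.2
    exact ⟨n, m, by rw [h1]; ring, h3, h2, h4.symm⟩⟩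

section Aux

variable {X : Type*} [TopologicalSpace X] {σ : X → X} {U V : Set X}

lemma iterDom_succ' (n : ℕ) (x : X) : x ∈ iterDom σ U V (n + 1) ↔
    x ∈ U ∧ σ x ∈ iterDom σ U V n ∧ σ x ∈ V := by
  simp [iterDom, mem_inter_iff, mem_preimage, and_assoc]

lemma iterDom_isOpen (hU : IsOpen U) (hV : IsOpen V) (hc : ContinuousOn σ U) :
    ∀ n, IsOpen (iterDom σ U V n)
  | 0 => isOpen_univ
  | (n + 1) => hc.isOpen_inter_preimage hU ((iterDom_isOpen hU hV hc n).inter hV)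

lemma mem_iterDom_add (m d : ℕ) (x : X) : x ∈ iterDom σ U V (m + d) ↔
    x ∈ iterDom σ U V m ∧ σ^[m] x ∈ iterDom σ U V d := by
  induction m generalizing x with
  | zero => simp [iterDom]
  | succ m ih =>
    have h : m + 1 + d = (m + d) + 1 := by omega
    rw [h, iterDom_succ', iterDom_succ']
    simp only [ih, Function.iterate_succ_apply]
    tauto

lemma exists_partialHomeo (hU : IsOpen U) (hV : IsOpen V) (hσ : IsLocalHomeomorphOn σ U) :
    ∀ (m : ℕ) (x : X), x ∈ iterDom σ U V m →
      ∃ e : OpenPartialHomeomorph X X, x ∈ e.source ∧ e.source ⊆ iterDom σ U V m ∧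
        Set.EqOn (σ^[m]) e e.source := by
  intro m
  induction m with
  | zero =>
    intro x _
    exact ⟨OpenPartialHomeomorph.refl X, mem_univ x, by simp [iterDom], by intro z _; simp⟩
  | succ m ih =>
    intro x hx
    rw [iterDom_succ'] at hx
    obtain ⟨hxU, hxm, hxV⟩ := hx
    obtain ⟨e₀, hx0, he0⟩ := hσ x hxU
    obtain ⟨e₁, hx1, hsub1, heq1⟩ := ih (σ x) hxm
    have Dopen : IsOpen (iterDom σ U V (m + 1)) :=
      iterDom_isOpen hU hV hσ.continuousOn (m + 1)
    refine ⟨(e₀.restrOpen (iterDom σ U V (m + 1)) Dopen).trans e₁, ?_, ?_, ?_⟩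
    · rw [OpenPartialHomeomorph.trans_source, OpenPartialHomeomorph.restrOpen_source]
      refine ⟨⟨hx0, ?_⟩, ?_⟩
      · rw [iterDom_succ']; exact ⟨hxU, hxm, hxV⟩
      · show (e₀.restrOpen _ Dopen) x ∈ e₁.source
        have : (e₀.restrOpen (iterDom σ U V (m + 1)) Dopen) x = σ x :=
          (congrFun he0 x).symm
        rw [this]; exact hx1
    · intro z hz
      rw [OpenPartialHomeomorph.trans_source, OpenPartialHomeomorph.restrOpen_source] at hz
      exact hz.1.2
    · intro z hz
      have hz' := hz
      rw [OpenPartialHomeomorph.trans_source, OpenPartialHomeomorph.restrOpen_source] at hz'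
      have hez : (e₀.restrOpen (iterDom σ U V (m + 1)) Dopen) z = σ z :=
        (congrFun he0 z).symm
      have hsz : σ z ∈ e₁.source := by
        have := hz'.2; rw [mem_preimage, hez] at this; exact this
      calc σ^[m + 1] z = σ^[m] (σ z) := Function.iterate_succ_apply σ m z
        _ = e₁ (σ z) := heq1 hsz
        _ = _ := by rw [OpenPartialHomeomorph.trans_apply, hez]

lemma HomeoOnto.injOn {f : X → X} {A : Set X} (h : HomeoOnto f A) : InjOn f A := by
  obtain ⟨e, hs, -, heq⟩ := h
  exact fun a ha b hb hab =>
    e.injOn (hs ▸ ha) (hs ▸ hb) (by rw [← heq ha, ← heq hb]; exact hab)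

lemma HomeoOnto.continuousOn {f : X → X} {A : Set X} (h : HomeoOnto f A) :
    ContinuousOn f A := by
  obtain ⟨e, hs, -, heq⟩ := h
  exact (hs ▸ e.continuousOn).congr heq

lemma HomeoOnto.isOpen_image (hU : IsOpen U) (hV : IsOpen V) (hσ : IsLocalHomeomorphOn σ U)
    {m : ℕ} {A : Set X} (hAo : IsOpen A) (hAsub : A ⊆ iterDom σ U V m) :
    IsOpen (σ^[m] '' A) := by
  rw [isOpen_iff_forall_mem_open]
  rintro _ ⟨a, ha, rfl⟩
  obtain ⟨e, hae, hsub, heq⟩ := exists_partialHomeo hU hV hσ m a (hAsub ha)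
  refine ⟨e '' (e.source ∩ A), ?_, e.isOpen_image_source_inter hAo, ⟨a, ⟨hae, ha⟩, (heq hae).symm⟩⟩
  rintro _ ⟨b, hb, rfl⟩
  exact ⟨b, hb.2, heq hb.1⟩

lemma HomeoOnto.mono {f : X → X} {A A' : Set X} (h : HomeoOnto f A) (hA' : IsOpen A')
    (hsub : A' ⊆ A) : HomeoOnto f A' := by
  obtain ⟨e, hs, ht, heq⟩ := h
  let e' : PartialHomeomorph X X :=
    { toPartialEquiv := e.toPartialEquiv.restr A'
      continuousOn_toFun := e.continuousOn.mono inter_subset_left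
      continuousOn_invFun := e.continuousOn_symm.mono inter_subset_left }
  refine ⟨e', ?_, ?_, heq.mono hsub⟩
  · show e.source ∩ A' = A'
    rw [hs, inter_eq_self_of_subset_right hsub]
  · have h1 : e'.target = e.target ∩ e.symm ⁻¹' A' := rfl
    rw [h1, ← e.image_source_inter_eq', hs, inter_eq_self_of_subset_right hsub]
    exact ((heq.mono hsub).image_eq).symm

lemma HomeoOnto.congr {f g : X → X} {A : Set X} (h : HomeoOnto f A) (hfg : EqOn f g A) :
    HomeoOnto g A := by
  obtain ⟨e, hs, ht, heq⟩ := h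
  exact ⟨e, hs, by rw [ht, hfg.image_eq], fun z hz => (hfg hz).symm.trans (heq hz)⟩

lemma exists_homeoOnto (hU : IsOpen U) (hV : IsOpen V) (hσ : IsLocalHomeomorphOn σ U)
    (m : ℕ) (x : X) (hx : x ∈ iterDom σ U V m) :
    ∃ A : Set X, IsOpen A ∧ x ∈ A ∧ A ⊆ iterDom σ U V m ∧ HomeoOnto (σ^[m]) A := by
  obtain ⟨e, hxe, hsub, heq⟩ := exists_partialHomeo hU hV hσ m x hx
  exact ⟨e.source, e.open_source, hxe, hsub,
    ⟨e.toPartialHomeomorph, rfl, (heq.image_eq.trans e.toPartialEquiv.image_source_eq_target).symm, heq⟩⟩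

end Aux

section Main

variable {X : Type*} [TopologicalSpace X] {σ : X → X} {U V : Set X}

/-- The basic set `Z(A, m, n, B)` as a set of the Deaconu–Renault groupoid. -/
def Zset (σ : X → X) (U V : Set X) (m n : ℕ) (A B : Set X) : Set ↥(DRset σ U V) :=
  {g : ↥(DRset σ U V) | g.1.1 ∈ A ∧ g.1.2.2 ∈ B ∧
    g.1.2.1 = (m : ℤ) - (n : ℤ) ∧ σ^[m] g.1.1 = σ^[n] g.1.2.2}

lemma basic_inter_aux (hU : IsOpen U) (hV : IsOpen V) (hσ : IsLocalHomeomorphOn σ U)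
    {m₁ n₁ m₂ n₂ : ℕ} {A₁ B₁ A₂ B₂ : Set X}
    (hA₁o : IsOpen A₁) (hB₁o : IsOpen B₁)
    (hA₂ : A₂ ⊆ iterDom σ U V m₂) (hB₂ : B₂ ⊆ iterDom σ U V n₂)
    (hHA₁ : HomeoOnto (σ^[m₁]) A₁) (hHB₁ : HomeoOnto (σ^[n₁]) B₁)
    (hHA₂ : HomeoOnto (σ^[m₂]) A₂) (hHB₂ : HomeoOnto (σ^[n₂]) B₂)
    (hle : m₁ ≤ m₂) (g : ↥(DRset σ U V))
    (hg1 : g ∈ Zset σ U V m₁ n₁ A₁ B₁) (hg2 : g ∈ Zset σ U V m₂ n₂ A₂ B₂)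
    (hA₂o : IsOpen A₂) (hB₂o : IsOpen B₂) :
    ∃ S ∈ DRbasic σ U V, g ∈ S ∧
      S ⊆ Zset σ U V m₁ n₁ A₁ B₁ ∩ Zset σ U V m₂ n₂ A₂ B₂ := by
  obtain ⟨hx1, hy1, hk1, he1⟩ := hg1
  obtain ⟨hx2, hy2, hk2, he2⟩ := hg2
  obtain ⟨d, rfl⟩ : ∃ d, m₂ = m₁ + d := ⟨m₂ - m₁, by omega⟩
  have hn2 : n₂ = n₁ + d := by have h := hk1.symm.trans hk2; omega
  subst hn2
  have hz : σ^[m₁] g.1.1 ∈ iterDom σ U V d := ((mem_iterDom_add m₁ d _).1 (hA₂ hx2)).2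
  obtain ⟨e, hze, -, heeq⟩ := exists_partialHomeo hU hV hσ d _ hz
  have hWo : IsOpen e.source := e.open_source
  have hWinj : InjOn (σ^[d]) e.source := fun a ha b hb hab =>
    e.injOn ha hb (by rw [← heeq ha, ← heeq hb]; exact hab)
  set A := (A₁ ∩ A₂) ∩ σ^[m₁] ⁻¹' e.source with hAdef
  set B := (B₁ ∩ B₂) ∩ σ^[n₁] ⁻¹' e.source with hBdef
  have hAo : IsOpen A := ContinuousOn.isOpen_inter_preimage
    (hHA₁.continuousOn.mono inter_subset_left) (hA₁o.inter hA₂o) hWo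
  have hBo : IsOpen B := ContinuousOn.isOpen_inter_preimage
    (hHB₁.continuousOn.mono inter_subset_left) (hB₁o.inter hB₂o) hWo
  have hAsub : A ⊆ A₂ := fun a ha => ha.1.2
  have hBsub : B ⊆ B₂ := fun a ha => ha.1.2
  refine ⟨Zset σ U V (m₁ + d) (n₁ + d) A B,
    ⟨m₁ + d, n₁ + d, A, B, hAo, hBo, hAsub.trans hA₂, hBsub.trans hB₂,
      hHA₂.mono hAo hAsub, hHB₂.mono hBo hBsub, rfl⟩, ?_, ?_⟩
  · refine ⟨⟨⟨hx1, hx2⟩, hze⟩, ⟨⟨hy1, hy2⟩, ?_⟩, hk2, he2⟩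
    show σ^[n₁] g.1.2.2 ∈ e.source
    rw [← he1]; exact hze
  · rintro g' ⟨hx', hy', hk', he'⟩
    have key : σ^[m₁] g'.1.1 = σ^[n₁] g'.1.2.2 := by
      apply hWinj hx'.2 hy'.2
      rw [← Function.iterate_add_apply, ← Function.iterate_add_apply,
        add_comm d m₁, add_comm d n₁]
      exact he'
    exact ⟨⟨hx'.1.1, hy'.1.1, by rw [hk']; push_cast; ring, key⟩,
      ⟨hx'.1.2, hy'.1.2, hk', he'⟩⟩

lemma dr_isBasis (hU : IsOpen U) (hV : IsOpen V) (hσ : IsLocalHomeomorphOn σ U) :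
    @TopologicalSpace.IsTopologicalBasis ↥(DRset σ U V) (DRtop σ U V) (DRbasic σ U V) := by
  letI := DRtop σ U V
  refine ⟨?_, ?_, rfl⟩
  · rintro t₁ ⟨m₁, n₁, A₁, B₁, hA₁o, hB₁o, hA₁, hB₁, hHA₁, hHB₁, rfl⟩
      t₂ ⟨m₂, n₂, A₂, B₂, hA₂o, hB₂o, hA₂, hB₂, hHA₂, hHB₂, rfl⟩ g ⟨hg1, hg2⟩
    rcases le_total m₁ m₂ with h | h
    · exact basic_inter_aux hU hV hσ hA₁o hB₁o hA₂ hB₂ hHA₁ hHB₁ hHA₂ hHB₂ h g hg1 hg2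
        hA₂o hB₂o
    · obtain ⟨S, hS, hgS, hsub⟩ := basic_inter_aux hU hV hσ hA₂o hB₂o hA₁ hB₁ hHA₂ hHB₂
        hHA₁ hHB₁ h g hg2 hg1 hA₁o hB₁o
      exact ⟨S, hS, hgS, fun a ha => ⟨(hsub ha).2, (hsub ha).1⟩⟩
  · apply eq_univ_of_forall
    intro g
    obtain ⟨m, n, hk, hxm, hyn, he⟩ := g.2
    obtain ⟨A, hAo, hxA, hAsub, hHA⟩ := exists_homeoOnto hU hV hσ m _ hxm
    obtain ⟨B, hBo, hyB, hBsub, hHB⟩ := exists_homeoOnto hU hV hσ n _ hyn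
    exact ⟨Zset σ U V m n A B,
      ⟨m, n, A, B, hAo, hBo, hAsub, hBsub, hHA, hHB, rfl⟩, hxA, hyB, hk, he⟩

end Main

theorem stmt19 {X : Type*} [TopologicalSpace X] [LocallyCompactSpace X] [T2Space X]
    (σ : X → X) (U V : Set X)
    (hU : IsOpen U) (hV : IsOpen V) (hσ : IsLocalHomeomorphOn σ U) (hσV : σ '' U = V) :
    -- the isotropy is the set of (x, k, x) with k ∈ Stab(x)
    ({g : ↥(DRset σ U V) | g.1.1 = g.1.2.2}
      = {g : ↥(DRset σ U V) | g.1.1 = g.1.2.2 ∧ g.1.2.1 ∈ DRStab σ U V g.1.1}) ∧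
    -- its interior is the set of (x, k, x) with k ∈ Stab^ess(x)
    (@interior _ (DRtop σ U V) {g : ↥(DRset σ U V) | g.1.1 = g.1.2.2}
      = {g : ↥(DRset σ U V) | g.1.1 = g.1.2.2 ∧ g.1.2.1 ∈ DRStabEss σ U V g.1.1}) ∧
    -- in particular:
    (∀ g ∈ @interior _ (DRtop σ U V) {g : ↥(DRset σ U V) | g.1.1 = g.1.2.2},
      ∃ m n : ℕ, g.1.2.1 = (m : ℤ) - (n : ℤ) ∧
        ∃ O : Set X, IsOpen O ∧ g.1.1 ∈ O ∧ O ⊆ iterDom σ U V m ∩ iterDom σ U V n ∧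
          Set.EqOn (σ^[m]) (σ^[n]) O) := by
  have hbasis := dr_isBasis (σ := σ) (U := U) (V := V) hU hV hσ
  have h2 : @interior _ (DRtop σ U V) {g : ↥(DRset σ U V) | g.1.1 = g.1.2.2}
      = {g : ↥(DRset σ U V) | g.1.1 = g.1.2.2 ∧ g.1.2.1 ∈ DRStabEss σ U V g.1.1} := by
    letI := DRtop σ U V
    ext g
    constructor
    · intro hg
      have hg' : g.1.1 = g.1.2.2 := (interior_subset hg : g ∈ {g : ↥(DRset σ U V) | g.1.1 = g.1.2.2})
      rw [mem_interior_iff_mem_nhds, hbasis.mem_nhds_iff] at hg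
      obtain ⟨S, hSb, hgS, hSsub⟩ := hg
      obtain ⟨m, n, A, B, hAo, hBo, hAsub, hBsub, hHA, hHB, rfl⟩ := hSb
      obtain ⟨hxA, hyB, hk, he⟩ := hgS
      refine ⟨hg', m, n, hk, ?_⟩
      have hxB : g.1.1 ∈ B := hg'.symm ▸ hyB
      have hex : σ^[m] g.1.1 = σ^[n] g.1.1 := by rw [he, hg']
      refine ⟨(A ∩ B) ∩ σ^[n] ⁻¹' (σ^[m] '' A),
        ContinuousOn.isOpen_inter_preimage (hHB.continuousOn.mono inter_subset_right)
          (hAo.inter hBo) (HomeoOnto.isOpen_image hU hV hσ hAo hAsub),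
        ⟨⟨hxA, hxB⟩, ⟨g.1.1, hxA, hex⟩⟩, ?_, ?_⟩
      · exact fun w hw => ⟨hAsub hw.1.1, hBsub hw.1.2⟩
      · intro w hw
        obtain ⟨⟨hwA, hwB⟩, w', hw'A, hw'e⟩ := hw
        have hmem : (w', (m : ℤ) - n, w) ∈ DRset σ U V :=
          ⟨m, n, rfl, hAsub hw'A, hBsub hwB, hw'e⟩
        have hmemS : (⟨(w', (m : ℤ) - n, w), hmem⟩ : ↥(DRset σ U V)) ∈
            {g : ↥(DRset σ U V) | g.1.1 ∈ A ∧ g.1.2.2 ∈ B ∧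
              g.1.2.1 = (m : ℤ) - (n : ℤ) ∧ σ^[m] g.1.1 = σ^[n] g.1.2.2} :=
          ⟨hw'A, hwB, rfl, hw'e⟩
        have hww : w' = w := hSsub hmemS
        exact hww ▸ hw'e
    · rintro ⟨hxy, m, n, hk, O, hOo, hxO, hOsub, hOeq⟩
      obtain ⟨A₀, hA₀o, hxA₀, -, hHA₀⟩ := exists_homeoOnto hU hV hσ m _ ((hOsub hxO).1)
      have hAo : IsOpen (A₀ ∩ O) := hA₀o.inter hOo
      have hHAm : HomeoOnto (σ^[m]) (A₀ ∩ O) := hHA₀.mono hAo inter_subset_left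
      have hHAn : HomeoOnto (σ^[n]) (A₀ ∩ O) := hHAm.congr (hOeq.mono inter_subset_right)
      have hbasic : Zset σ U V m n (A₀ ∩ O) (A₀ ∩ O) ∈ DRbasic σ U V :=
        ⟨m, n, A₀ ∩ O, A₀ ∩ O, hAo, hAo, fun a ha => (hOsub ha.2).1,
          fun a ha => (hOsub ha.2).2, hHAm, hHAn, rfl⟩
      rw [mem_interior]
      refine ⟨Zset σ U V m n (A₀ ∩ O) (A₀ ∩ O), ?_, hbasis.isOpen hbasic, ?_⟩
      · rintro g' ⟨hx', hy', hk', he'⟩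
        show g'.1.1 = g'.1.2.2
        exact hHAm.injOn hx' hy' (he'.trans (hOeq hy'.2).symm)
      · exact ⟨⟨hxA₀, hxO⟩, hxy ▸ ⟨hxA₀, hxO⟩, hk, by rw [← hxy]; exact hOeq hxO⟩
  refine ⟨?_, h2, ?_⟩
  · ext g
    simp only [mem_setOf_eq]
    constructor
    · intro hxy
      obtain ⟨m, n, hk, hxm, hyn, he⟩ := g.2
      exact ⟨hxy, m, n, hk, ⟨hxm, hxy.symm ▸ hyn⟩, hxy.symm ▸ he⟩
    · exact fun h => h.1
  · intro g hg
    rw [h2] at hg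
    obtain ⟨m, n, hk, O, hOo, hxO, hOsub, hOeq⟩ := hg.2
    exact ⟨m, n, hk, O, hOo, hxO, hOsub, hOeq⟩
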